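/- Let f be a monic irreducible polynomial of degree 2n over F_q and α ∈ F_{q^{2n}} a root of f. A matrix T ∈ M_{2n}(F_q) satisfies: T is a (2,n)-block companion matrix with characteristic polynomial f, if and only if T is the matrix of the F_q-linear map x ↦ αx on F_{q^{2n}} with respect to an ordered basis of the form (v_1, v_2, αv_1, αv_2, ..., α^{n-1}v_1, α^{n-1}v_2) for some v_1, v_2 ∈ F_{q^{2n}}. -/

import Mathlib

open Polynomial

/-- An (m,n)-block companion matrix: identity blocks on the block subdiagonal,
arbitrary m×m blocks in the last block column, zeros elsewhere. -/
def IsBlockCompanion {F : Type*} [Field F] {m n : ℕ}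
    (T : Matrix (Fin n × Fin m) (Fin n × Fin m) F) : Prop :=
  ∃ C : Fin n → Matrix (Fin m) (Fin m) F,
    ∀ (i j : Fin n) (a b : Fin m),
      T (i, a) (j, b) =
        if (j : ℕ) = n - 1 then C i a b
        else if (i : ℕ) = (j : ℕ) + 1 then (if a = b then 1 else 0) else 0

lemma charpoly_mulLeft_eq {F : Type*} [Field F] {K : Type*} [Field K] [Algebra F K]
    [FiniteDimensional F K] {f : Polynomial F} (hf : f.Monic) (hirr : Irreducible f)
    {α : K} (hα : Polynomial.aeval α f = 0)
    (hdim : f.natDegree = Module.finrank F K) :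
    LinearMap.charpoly (LinearMap.mulLeft F α) = f := by
  have hmin : minpoly F α = f := (minpoly.eq_of_irreducible_of_monic hirr hα hf).symm
  have hlm : LinearMap.mulLeft F α = Algebra.lmul F K α := LinearMap.ext fun x => rfl
  set p := LinearMap.charpoly (LinearMap.mulLeft F α) with hp
  have h0 : Polynomial.aeval α p = 0 := by
    have h1 := LinearMap.aeval_self_charpoly (LinearMap.mulLeft F α)
    have h2 : Polynomial.aeval (Algebra.lmul F K α) p = Algebra.lmul F K (Polynomial.aeval α p) :=
      Polynomial.aeval_algHom_apply (Algebra.lmul F K) α p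
    rw [← hlm, h1] at h2
    have := congrArg (fun g => g 1) h2
    simpa using this.symm
  have hdvd : f ∣ p := hmin ▸ minpoly.dvd F α h0
  have hpd : p.natDegree = Module.finrank F K := LinearMap.charpoly_natDegree _
  exact Polynomial.eq_of_monic_of_dvd_of_natDegree_le hf (LinearMap.charpoly_monic _)
    hdvd (by rw [hpd, hdim])

set_option maxHeartbeats 1000000 in
/-- T is a (2,n)-block companion matrix with characteristic polynomial f
iff T is the matrix of x ↦ αx with respect to an ordered basis of the form
(v₁, v₂, αv₁, αv₂, ..., α^{n-1}v₁, α^{n-1}v₂). -/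
theorem stmt_5 (F : Type*) [Field F] [Fintype F]
    (n : ℕ) (hn : 0 < n)
    (K : Type*) [Field K] [Algebra F K] [FiniteDimensional F K]
    (hK : Module.finrank F K = 2 * n)
    (f : Polynomial F) (hf : f.Monic) (hirr : Irreducible f)
    (hdeg : f.natDegree = 2 * n)
    (α : K) (hα : Polynomial.aeval α f = 0)
    (T : Matrix (Fin n × Fin 2) (Fin n × Fin 2) F) :
    (IsBlockCompanion T ∧ Matrix.charpoly T = f) ↔
      ∃ (v : Fin 2 → K) (b : Module.Basis (Fin n × Fin 2) F K),
        (∀ p : Fin n × Fin 2, b p = α ^ (p.1 : ℕ) * v p.2) ∧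
        T = LinearMap.toMatrix b b (LinearMap.mulLeft F α) := by
  have hcml : LinearMap.charpoly (LinearMap.mulLeft F α) = f :=
    charpoly_mulLeft_eq hf hirr hα (by rw [hdeg, hK])
  constructor
  · rintro ⟨⟨C, hC⟩, hch⟩
    -- setup
    haveI : Fact (Irreducible f) := ⟨hirr⟩
    have hfne : f ≠ 0 := hf.ne_zero
    set V := (Fin n × Fin 2) → F with hV
    set φ : V →ₗ[F] V := Matrix.toLin' T with hφ
    have hchφ : LinearMap.charpoly φ = f := by
      rw [← LinearMap.charpoly_toMatrix φ (Pi.basisFun F (Fin n × Fin 2)),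
        LinearMap.toMatrix_eq_toMatrix', LinearMap.toMatrix'_toLin', hch]
    have hTf : Polynomial.aeval φ f = 0 := by
      rw [← hchφ]; exact LinearMap.aeval_self_charpoly φ
    have hspan : ∀ g ∈ Ideal.span {f}, Polynomial.aeval φ g = 0 := by
      intro g hg
      obtain ⟨c, rfl⟩ := Ideal.mem_span_singleton.mp hg
      rw [map_mul, hTf, zero_mul]
    set L : AdjoinRoot f →ₐ[F] Module.End F V :=
      Ideal.Quotient.liftₐ (Ideal.span {f}) (Polynomial.aeval φ) hspan with hL
    have hLroot : L (AdjoinRoot.root f) = φ := by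
      show Ideal.Quotient.liftₐ _ _ _ (Ideal.Quotient.mk _ (X : Polynomial F)) = φ
      rw [show (Ideal.Quotient.mk (Ideal.span {f}) X) = Ideal.Quotient.mkₐ F (Ideal.span {f}) X from rfl,
        ← AlgHom.comp_apply, Ideal.Quotient.liftₐ_comp]
      simp
    set A : AdjoinRoot f →ₐ[F] K := AdjoinRoot.liftAlgHom f (Algebra.ofId F K) α hα with hA
    haveI : FiniteDimensional F (AdjoinRoot f) :=
      Module.Finite.of_basis (AdjoinRoot.powerBasis hfne).basis
    have frA : Module.finrank F (AdjoinRoot f) = 2 * n := by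
      rw [(AdjoinRoot.powerBasis hfne).finrank, AdjoinRoot.powerBasis_dim, hdeg]
    have frV : Module.finrank F V = 2 * n := by
      show Module.finrank F (Fin n × Fin 2 → F) = 2 * n
      rw [Module.finrank_fintype_fun_eq_card, Fintype.card_prod, Fintype.card_fin,
        Fintype.card_fin, mul_comm]
    -- the algebra equiv AdjoinRoot f ≃ K
    have Ainj : Function.Injective A := A.toRingHom.injective
    have Asurj : Function.Surjective A :=
      (LinearMap.injective_iff_surjective_of_finrank_eq_finrank
        (frA.trans hK.symm)).mp (show Function.Injective A.toLinearMap from Ainj)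
    let Aeq : AdjoinRoot f ≃ₐ[F] K := AlgEquiv.ofBijective A ⟨Ainj, Asurj⟩
    -- the cyclic vector map
    let p0 : Fin n × Fin 2 := ⟨⟨0, hn⟩, 0⟩
    let w : V := Pi.single p0 1
    have hw : w ≠ 0 := by
      intro h
      have := congrFun h p0
      rw [show (0 : V) p0 = 0 from rfl] at this
      exact one_ne_zero this
    let e₀ : AdjoinRoot f →ₗ[F] V :=
      { toFun := fun g => L g w
        map_add' := fun x y => by simp [map_add]
        map_smul' := fun c x => by simp [map_smul] }
    have e₀inj : Function.Injective e₀ := by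
      rw [← LinearMap.ker_eq_bot, LinearMap.ker_eq_bot']
      intro g hg
      by_contra hg0
      apply hw
      have : L (g⁻¹ * g) w = 0 := by
        rw [map_mul]
        show L g⁻¹ (L g w) = 0
        rw [show L g w = 0 from hg, map_zero]
      rwa [inv_mul_cancel₀ hg0, map_one, Module.End.one_apply] at this
    have e₀surj : Function.Surjective e₀ :=
      (LinearMap.injective_iff_surjective_of_finrank_eq_finrank
        (frA.trans frV.symm)).mp e₀inj
    let E₀ : AdjoinRoot f ≃ₗ[F] V := LinearEquiv.ofBijective e₀ ⟨e₀inj, e₀surj⟩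
    let E : K ≃ₗ[F] V := Aeq.symm.toLinearEquiv.trans E₀
    have hroot : Aeq.symm α = AdjoinRoot.root f := by
      apply Aeq.injective
      rw [AlgEquiv.apply_symm_apply]
      exact (AdjoinRoot.liftAlgHom_root (p := f) (i := Algebra.ofId F K) (x := α) (h := hα)).symm
    have hkey : ∀ x : K, E (α * x) = φ (E x) := by
      intro x
      show E₀ (Aeq.symm (α * x)) = φ (E₀ (Aeq.symm x))
      rw [map_mul, hroot]
      show e₀ (AdjoinRoot.root f * Aeq.symm x) = φ (e₀ (Aeq.symm x))
      show L (AdjoinRoot.root f * Aeq.symm x) w = φ (L (Aeq.symm x) w)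
      rw [map_mul]
      rw [hLroot]
      rfl
    let b : Module.Basis (Fin n × Fin 2) F K := (Pi.basisFun F (Fin n × Fin 2)).map E.symm
    have hbE : ∀ q, E (b q) = Pi.single q 1 := by
      intro q
      show E (E.symm (Pi.basisFun F (Fin n × Fin 2) q)) = _
      rw [LinearEquiv.apply_symm_apply, Pi.basisFun_apply]
    have hrepr : ∀ x (p : Fin n × Fin 2), b.repr x p = E x p := by
      intro x p
      show ((Pi.basisFun F (Fin n × Fin 2)).map E.symm).repr x p = _
      rw [Module.Basis.map_repr]
      simp
    have hmat : ∀ p q, LinearMap.toMatrix b b (LinearMap.mulLeft F α) p q = T p q := by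
      intro p q
      rw [LinearMap.toMatrix_apply, LinearMap.mulLeft_apply, hrepr, hkey, hbE]
      rw [hφ]
      rw [Matrix.toLin'_apply]
      rw [Matrix.mulVec_single]
      simp
    have hstep : ∀ (j : ℕ) (hj : j + 1 < n) (c : Fin 2),
        α * b (⟨j, by omega⟩, c) = b (⟨j + 1, hj⟩, c) := by
      intro j hj c
      apply b.ext_elem_iff.mpr
      intro p
      have h1 : b.repr (α * b (⟨j, by omega⟩, c)) p = T p (⟨j, by omega⟩, c) := by
        rw [← hmat, LinearMap.toMatrix_apply, LinearMap.mulLeft_apply]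
      rw [h1, Module.Basis.repr_self, Finsupp.single_apply]
      obtain ⟨⟨i, hi⟩, a⟩ := p
      rw [hC]
      simp only
      have hjne : j ≠ n - 1 := by omega
      rw [if_neg hjne]
      by_cases h2 : i = j + 1
      · subst h2
        by_cases h3 : a = c
        · subst h3
          rw [if_pos rfl, if_pos rfl, if_pos rfl]
        · rw [if_pos rfl, if_neg h3, if_neg (fun h => h3 (congrArg Prod.snd h).symm)]
      · rw [if_neg h2, if_neg (fun h => h2 (congrArg (fun p => ((p.1 : Fin n) : ℕ)) h).symm)]
    refine ⟨fun c => b (⟨0, hn⟩, c), b, ?_, ?_⟩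
    · rintro ⟨⟨i, hi⟩, c⟩
      induction i with
      | zero => simp
      | succ k ih =>
        have hk : k + 1 < n := hi
        rw [← hstep k hk c, ih (by omega)]
        rw [pow_succ]
        ring
    · ext p q
      exact (hmat p q).symm
  · rintro ⟨v, b, hb, hT⟩
    have hnm : n - 1 < n := by omega
    constructor
    · refine ⟨fun i a c => T (i, a) (⟨n - 1, hnm⟩, c), ?_⟩
      intro i j a c
      by_cases hj : (j : ℕ) = n - 1
      · rw [if_pos hj]
        have : j = ⟨n - 1, hnm⟩ := Fin.ext hj
        rw [this]
      · rw [if_neg hj]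
        have hj1 : (j : ℕ) + 1 < n := by have := j.isLt; omega
        have hbj : α * b (j, c) = b (⟨(j : ℕ) + 1, hj1⟩, c) := by
          rw [hb (j, c), hb (⟨(j : ℕ) + 1, hj1⟩, c)]
          simp only
          rw [← mul_assoc, ← pow_succ']
        have : T (i, a) (j, c) = b.repr (α * b (j, c)) (i, a) := by
          rw [hT, LinearMap.toMatrix_apply, LinearMap.mulLeft_apply]
        rw [this, hbj, Module.Basis.repr_self, Finsupp.single_apply]
        by_cases h2 : (i : ℕ) = (j : ℕ) + 1
        · rw [if_pos h2]
          by_cases h3 : a = c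
          · subst h3
            have hfin : (⟨(j : ℕ) + 1, hj1⟩ : Fin n) = i := Fin.ext h2.symm
            rw [if_pos (by rw [hfin]), if_pos rfl]
          · rw [if_neg (fun h => h3 (congrArg Prod.snd h).symm), if_neg h3]
        · rw [if_neg h2, if_neg (fun h => h2 (congrArg (fun p => ((p.1 : Fin n) : ℕ)) h).symm)]
    · rw [hT, LinearMap.charpoly_toMatrix, hcml]
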